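/- Let F = FreeGroup α be a free group with a distinguished generator a = of(s), word metric d(x,y) = |x⁻¹y|, γ_v = {g ∈ F : for all sufficiently large k ∈ ℕ, d(v, a^k) = d(v,g) + d(g, a^k)}, γ_v^n = {g ∈ γ_v : d(v,g) ≤ n}, and u_n(x,y) = |γ_x^n ∩ γ_y^n|/(n+1). Then for every finite subset E ⊆ F and every ε > 0 there exists N ∈ ℕ such that |1 − u_N(x,y)| < ε whenever x⁻¹y ∈ E. -/

import Mathlib

/-- The word metric on the free group: `d x y = |x⁻¹y|`, the length of the
reduced word of `x⁻¹y`. -/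
def wordDist {α : Type*} [DecidableEq α] (x y : FreeGroup α) : ℕ :=
  (x⁻¹ * y).toWord.length

/-- The geodesic ray issuing from `v` and merging with the ray `γ₀ = {a^k : k ≥ 0}`
where `a = FreeGroup.of s`. -/
def gammaRay {α : Type*} [DecidableEq α] (s : α) (v : FreeGroup α) : Set (FreeGroup α) :=
  {g | ∀ᶠ k : ℕ in Filter.atTop,
    wordDist v ((FreeGroup.of s) ^ k) =
      wordDist v g + wordDist g ((FreeGroup.of s) ^ k)}

/-- The initial segment `γ_v^n` of length `n` of the geodesic ray `γ_v`. -/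
def gammaSeg {α : Type*} [DecidableEq α] (s : α) (v : FreeGroup α) (n : ℕ) :
    Set (FreeGroup α) :=
  {g ∈ gammaRay s v | wordDist v g ≤ n}


namespace FGAux
open FreeGroup List

variable {α : Type*} [DecidableEq α]

/-- The non-cancellation relation between adjacent letters. -/
def Rel (p q : α × Bool) : Prop := ¬(p.1 = q.1 ∧ p.2 = !q.2)

/-- A word is reduced. -/
def Reduced (L : List (α × Bool)) : Prop := List.Chain' Rel L

lemma reduce_eq_self : ∀ {L : List (α × Bool)}, Reduced L → FreeGroup.reduce L = L
  | [], _ => rfl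
  | [p], _ => rfl
  | p :: q :: L, h => by
    have h' : Reduced (q :: L) := List.IsChain.tail h
    have hr : Rel p q := (List.isChain_cons_cons.1 h).1
    rw [FreeGroup.reduce.cons, reduce_eq_self h']
    exact if_neg hr

lemma reduced_reduce : ∀ (L : List (α × Bool)), Reduced (FreeGroup.reduce L)
  | [] => List.isChain_nil
  | p :: L => by
    have ih := reduced_reduce L
    rw [FreeGroup.reduce.cons]
    rcases hL : FreeGroup.reduce L with _ | ⟨q, T⟩
    · exact List.isChain_singleton p
    · rw [hL] at ih
      by_cases hc : p.1 = q.1 ∧ p.2 = !q.2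
      · simpa [hc] using (show Reduced T from ih.tail)
      · show Reduced (if p.1 = q.1 ∧ p.2 = !q.2 then T else p :: q :: T)
        rw [if_neg hc]
        exact List.isChain_cons_cons.2 ⟨hc, ih⟩

lemma reduced_toWord (x : FreeGroup α) : Reduced x.toWord := by
  rw [← FreeGroup.reduce_toWord]
  exact reduced_reduce _

lemma rel_neg {p q : α × Bool} (h : Rel p q) : Rel (q.1, !q.2) (p.1, !p.2) := by
  rcases p with ⟨a, b⟩; rcases q with ⟨c, d⟩
  simp only [Rel, not_and] at h ⊢
  intro hac; subst hac
  cases b <;> cases d <;> simp_all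

lemma reduced_invRev {L : List (α × Bool)} (h : Reduced L) : Reduced (invRev L) := by
  unfold FreeGroup.invRev
  show List.IsChain Rel _
  rw [List.isChain_reverse]
  refine List.isChain_map_of_isChain _ (fun a b hab => ?_) h
  exact rel_neg hab

lemma reduced_replicate (k : ℕ) (c : α × Bool) : Reduced (List.replicate k c) := by
  induction k with
  | zero => exact List.isChain_nil
  | succ n ih =>
    rcases n with _ | m
    · exact List.isChain_singleton c
    · rw [List.replicate_succ]
      refine List.isChain_cons_cons.2 ⟨?_, ih⟩
      simp [Rel]

/-- length of the longest common prefix. -/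
def cpl : List (α × Bool) → List (α × Bool) → ℕ
  | a :: as, b :: bs => if a = b then cpl as bs + 1 else 0
  | _, _ => 0

lemma cpl_nil_left (L : List (α × Bool)) : cpl [] L = 0 := by cases L <;> rfl

lemma cpl_nil_right (L : List (α × Bool)) : cpl L [] = 0 := by cases L <;> rfl

lemma cpl_le_left : ∀ (A B : List (α × Bool)), cpl A B ≤ A.length
  | [], B => by simp [cpl_nil_left]
  | a :: as, [] => by simp [cpl_nil_right]
  | a :: as, b :: bs => by
    rw [cpl]
    split
    · simpa using cpl_le_left as bs
    · simp

lemma cpl_comm : ∀ (A B : List (α × Bool)), cpl A B = cpl B A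
  | [], B => by simp [cpl_nil_left, cpl_nil_right]
  | a :: as, [] => by simp [cpl_nil_left, cpl_nil_right]
  | a :: as, b :: bs => by
    rw [cpl, cpl, cpl_comm as bs]
    rcases eq_or_ne a b with h | h
    · simp [h]
    · simp [h, Ne.symm h]

lemma cpl_le_right (A B : List (α × Bool)) : cpl A B ≤ B.length := by
  rw [cpl_comm]; exact cpl_le_left B A

lemma cpl_ultra : ∀ (A B C : List (α × Bool)), min (cpl A B) (cpl A C) ≤ cpl B C
  | [], _, _ => by simp [cpl_nil_left]
  | _ :: _, [], _ => by simp [cpl_nil_right]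
  | _ :: _, _, [] => by simp [cpl_nil_right]
  | a :: as, b :: bs, c :: cs => by
    have ih := cpl_ultra as bs cs
    rw [cpl, cpl, cpl]
    rcases eq_or_ne a b with hab | hab
    · rcases eq_or_ne a c with hac | hac
      · have hbc : b = c := hab ▸ hac
        rw [if_pos hab, if_pos hac, if_pos hbc]
        omega
      · rw [if_pos hab, if_neg hac]
        omega
    · rw [if_neg hab]
      omega

lemma cpl_take : ∀ (L : List (α × Bool)) (m : ℕ), cpl L (L.take m) = min m L.length
  | [], m => by simp [cpl_nil_right]
  | a :: as, 0 => by simp [cpl_nil_right]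
  | a :: as, m + 1 => by
    have h1 := cpl_take as m
    rw [List.take_succ_cons, cpl, if_pos rfl, h1, List.length_cons]
    omega

/-- the number of leading letters equal to `c`. -/
def leadCount (c : α × Bool) : List (α × Bool) → ℕ
  | [] => 0
  | a :: as => if a = c then leadCount c as + 1 else 0

lemma leadCount_le_length (c : α × Bool) : ∀ (L : List (α × Bool)), leadCount c L ≤ L.length
  | [] => le_rfl
  | a :: as => by
    rw [leadCount]
    split
    · simpa using leadCount_le_length c as
    · simp

lemma cpl_replicate (c : α × Bool) :
    ∀ (L : List (α × Bool)) (k : ℕ), cpl L (List.replicate k c) = min (leadCount c L) k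
  | [], k => by simp [cpl_nil_left, leadCount]
  | a :: as, 0 => by simp [cpl_nil_right, leadCount]
  | a :: as, k + 1 => by
    rw [List.replicate_succ, cpl, leadCount, cpl_replicate c as k]
    rcases eq_or_ne a c with h | h
    · rw [if_pos h, if_pos h]; omega
    · rw [if_neg h, if_neg h]; omega

lemma leadCount_take (c : α × Bool) :
    ∀ (L : List (α × Bool)) (m : ℕ), leadCount c (L.take m) = min m (leadCount c L)
  | [], m => by simp [leadCount]
  | a :: as, 0 => by simp [leadCount]
  | a :: as, m + 1 => by
    rw [List.take_succ_cons, leadCount, leadCount, leadCount_take c as m]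
    rcases eq_or_ne a c with h | h
    · rw [if_pos h, if_pos h]; omega
    · rw [if_neg h, if_neg h]; omega

lemma invRev_cons (a : α × Bool) (L : List (α × Bool)) :
    invRev (a :: L) = invRev L ++ [(a.1, !a.2)] := by
  simp [invRev]

/-- The key reduction lemma: reducing `U⁻¹ ++ V` cancels exactly the common prefix. -/
lemma reduce_invRev_append :
    ∀ (U V : List (α × Bool)), Reduced U → Reduced V →
      FreeGroup.reduce (invRev U ++ V) =
        invRev (U.drop (cpl U V)) ++ V.drop (cpl U V)
  | [], V, _, hV => by
    simp [invRev, cpl_nil_left, reduce_eq_self hV]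
  | a :: as, [], hU, _ => by
    simp only [cpl_nil_right, List.drop_zero, List.append_nil]
    exact reduce_eq_self (reduced_invRev hU)
  | a :: as, b :: bs, hU, hV => by
    rcases eq_or_ne a b with h | h
    · subst h
      have step : Red.Step (invRev (a :: as) ++ a :: bs) (invRev as ++ bs) := by
        rw [invRev_cons, List.append_assoc]
        rcases a with ⟨x, c⟩
        exact Red.Step.not_rev
      rw [FreeGroup.reduce.Step.eq step, cpl, if_pos rfl,
        reduce_invRev_append as bs hU.tail hV.tail]
      simp
    · have hc : cpl (a :: as) (b :: bs) = 0 := by rw [cpl, if_neg h]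
      rw [hc]
      simp only [List.drop_zero]
      refine reduce_eq_self ?_
      refine List.IsChain.append (reduced_invRev hU) hV ?_
      intro p hp q hq
      rw [invRev_cons, List.getLast?_concat] at hp
      simp only [Option.mem_def, Option.some.injEq] at hp
      simp only [List.head?_cons, Option.mem_def, Option.some.injEq] at hq
      subst hp; subst hq
      rcases a with ⟨u, c⟩; rcases b with ⟨v, d⟩
      simp only [Rel, not_and]
      intro huv hcd
      apply h
      cases huv
      cases Bool.not_inj hcd
      rfl

end FGAux

namespace FGAux
open FreeGroup List

variable {α : Type*} [DecidableEq α]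

lemma toWord_inv_mul (u v : FreeGroup α) :
    (u⁻¹ * v).toWord =
      invRev (u.toWord.drop (cpl u.toWord v.toWord)) ++
        v.toWord.drop (cpl u.toWord v.toWord) := by
  conv_lhs => rw [← FreeGroup.mk_toWord (x := u), ← FreeGroup.mk_toWord (x := v)]
  rw [FreeGroup.inv_mk, FreeGroup.mul_mk, FreeGroup.toWord_mk]
  exact reduce_invRev_append _ _ (reduced_toWord u) (reduced_toWord v)

lemma wordDist_formula (u v : FreeGroup α) :
    wordDist u v + 2 * cpl u.toWord v.toWord = u.toWord.length + v.toWord.length := by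
  have h1 := cpl_le_left u.toWord v.toWord
  have h2 := cpl_le_right u.toWord v.toWord
  rw [wordDist, toWord_inv_mul, List.length_append, FreeGroup.invRev_length,
    List.length_drop, List.length_drop]
  omega

lemma wordDist_symm (x y : FreeGroup α) : wordDist x y = wordDist y x := by
  rw [wordDist, wordDist, ← FreeGroup.invRev_length (L₁ := (y⁻¹ * x).toWord),
    ← FreeGroup.toWord_inv, mul_inv_rev, inv_inv]

lemma eq_of_wordDist_eq_zero {x y : FreeGroup α} (h : wordDist x y = 0) : x = y := by
  rw [wordDist, List.length_eq_zero_iff, FreeGroup.toWord_eq_nil_iff] at h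
  have := congrArg (x * ·) h
  simpa [mul_assoc] using this.symm

lemma wordDist_triangle (x y z : FreeGroup α) :
    wordDist x z ≤ wordDist x y + wordDist y z := by
  have h : x⁻¹ * z = (x⁻¹ * y) * (y⁻¹ * z) := by group
  rw [wordDist, h]
  calc ((x⁻¹ * y) * (y⁻¹ * z)).toWord.length
      ≤ ((x⁻¹ * y).toWord ++ (y⁻¹ * z).toWord).length :=
        (FreeGroup.toWord_mul_sublist _ _).length_le
    _ = wordDist x y + wordDist y z := by rw [List.length_append]; rfl

lemma wordDist_fourPoint (p q r w : FreeGroup α) :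
    wordDist p q + wordDist r w ≤
      max (wordDist p r + wordDist q w) (wordDist p w + wordDist q r) := by
  set A := p⁻¹ * q with hA
  set B := p⁻¹ * r with hB
  set C := p⁻¹ * w with hC
  have epq : wordDist p q = A.toWord.length := rfl
  have epr : wordDist p r = B.toWord.length := rfl
  have epw : wordDist p w = C.toWord.length := rfl
  have erw : wordDist r w = wordDist B C := by
    rw [wordDist, wordDist]; congr 2; rw [hB, hC]; group
  have eqw : wordDist q w = wordDist A C := by
    rw [wordDist, wordDist]; congr 2; rw [hA, hC]; group
  have eqr : wordDist q r = wordDist A B := by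
    rw [wordDist, wordDist]; congr 2; rw [hA, hB]; group
  rw [epq, epr, epw, erw, eqw, eqr]
  have fAB := wordDist_formula A B
  have fAC := wordDist_formula A C
  have fBC := wordDist_formula B C
  have hu := cpl_ultra A.toWord B.toWord C.toWord
  have h1 := cpl_le_left A.toWord B.toWord
  have h2 := cpl_le_left A.toWord C.toWord
  rcases le_total (cpl A.toWord B.toWord) (cpl A.toWord C.toWord) with h | h
  · apply le_max_of_le_right; omega
  · apply le_max_of_le_left; omega

end FGAux

namespace FGAux
open FreeGroup List

variable {α : Type*} [DecidableEq α] (s : α)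

lemma dist_pow (x : FreeGroup α) {k : ℕ} (hk : leadCount (s, true) x.toWord ≤ k) :
    wordDist x (FreeGroup.of s ^ k) + 2 * leadCount (s, true) x.toWord
      = x.toWord.length + k := by
  have h := wordDist_formula x (FreeGroup.of s ^ k)
  rw [FreeGroup.toWord_of_pow, cpl_replicate, List.length_replicate,
    min_eq_left hk] at h
  exact h

lemma dist_pow_pow {j k : ℕ} (hjk : j ≤ k) :
    wordDist ((FreeGroup.of s : FreeGroup α) ^ j) (FreeGroup.of s ^ k) = k - j := by
  have h : (FreeGroup.of s : FreeGroup α) ^ k = FreeGroup.of s ^ j * FreeGroup.of s ^ (k - j) := by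
    rw [← pow_add, Nat.add_sub_cancel' hjk]
  rw [wordDist, h, inv_mul_cancel_left, FreeGroup.toWord_of_pow, List.length_replicate]

lemma mem_gamma_pow (x : FreeGroup α) {j : ℕ} (hj : leadCount (s, true) x.toWord ≤ j) :
    FreeGroup.of s ^ j ∈ gammaRay s x := by
  refine Filter.eventually_atTop.2 ⟨j, fun k hk => ?_⟩
  have h1 := dist_pow s x hj
  have h2 := dist_pow s x (le_trans hj hk)
  rw [dist_pow_pow s hk]
  omega

lemma toWord_prefix (x : FreeGroup α) (m : ℕ) :
    (FreeGroup.mk (x.toWord.take m)).toWord = x.toWord.take m := by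
  rw [FreeGroup.toWord_mk]
  exact reduce_eq_self ((reduced_toWord x).take m)

lemma dist_prefix (x : FreeGroup α) {m : ℕ} (hm : m ≤ x.toWord.length) :
    wordDist x (FreeGroup.mk (x.toWord.take m)) = x.toWord.length - m := by
  have h := wordDist_formula x (FreeGroup.mk (x.toWord.take m))
  rw [toWord_prefix, cpl_take, min_eq_left hm, List.length_take, min_eq_left hm] at h
  omega

lemma mem_gamma_prefix (x : FreeGroup α) {m : ℕ}
    (ht : leadCount (s, true) x.toWord ≤ m) (hm : m ≤ x.toWord.length) :
    FreeGroup.mk (x.toWord.take m) ∈ gammaRay s x := by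
  refine Filter.eventually_atTop.2 ⟨leadCount (s, true) x.toWord, fun k hk => ?_⟩
  have h1 := dist_pow s x hk
  have h2 := dist_prefix x hm
  have h3 := wordDist_formula (FreeGroup.mk (x.toWord.take m)) (FreeGroup.of s ^ k)
  rw [toWord_prefix, FreeGroup.toWord_of_pow, cpl_replicate, leadCount_take,
    List.length_replicate, List.length_take, min_eq_right ht, min_eq_left hk,
    min_eq_left hm] at h3
  omega

/-- The point at distance `n` from `x` on the ray `γ_x`. -/
def pt (s : α) (x : FreeGroup α) (n : ℕ) : FreeGroup α :=
  if n + leadCount (s, true) x.toWord ≤ x.toWord.length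
  then FreeGroup.mk (x.toWord.take (x.toWord.length - n))
  else FreeGroup.of s ^ (n + 2 * leadCount (s, true) x.toWord - x.toWord.length)

lemma pt_mem (x : FreeGroup α) (n : ℕ) : pt s x n ∈ gammaRay s x := by
  rw [pt]
  split
  · exact mem_gamma_prefix s x (by omega) (by omega)
  · refine mem_gamma_pow s x ?_
    have := leadCount_le_length (s, true) x.toWord
    omega

lemma pt_dist (x : FreeGroup α) (n : ℕ) : wordDist x (pt s x n) = n := by
  rw [pt]
  split
  · rw [dist_prefix x (by omega)]
    omega
  · have hlen := leadCount_le_length (s, true) x.toWord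
    have h := dist_pow s x (k := n + 2 * leadCount (s, true) x.toWord - x.toWord.length)
      (by omega)
    omega

lemma gamma_eq_pt {x g : FreeGroup α} (hg : g ∈ gammaRay s x) :
    g = pt s x (wordDist x g) := by
  have hp := pt_mem s x (wordDist x g)
  have hpd := pt_dist s x (wordDist x g)
  obtain ⟨k, hk1, hk2⟩ := (Filter.Eventually.and hg hp).exists
  have fp := wordDist_fourPoint g (pt s x (wordDist x g)) x (FreeGroup.of s ^ k)
  have s1 := wordDist_symm g x
  have s2 := wordDist_symm (pt s x (wordDist x g)) x
  apply eq_of_wordDist_eq_zero (x := g)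
  rcases le_max_iff.1 fp with h | h <;> omega

lemma mem_gamma_of_dist_lt {x y g : FreeGroup α} (hg : g ∈ gammaRay s x)
    (hlt : wordDist x y < wordDist x g) : g ∈ gammaRay s y := by
  refine Filter.Eventually.mono hg (fun k hk => ?_)
  have fp := wordDist_fourPoint y g x (FreeGroup.of s ^ k)
  have tri := wordDist_triangle y g (FreeGroup.of s ^ k)
  have s1 := wordDist_symm y x
  have s2 := wordDist_symm g x
  rcases le_max_iff.1 fp with h | h <;> omega

end FGAux


/-- For every finite subset `E` of the free group and every `ε > 0` there exists
`N` such that `|1 − u_N(x,y)| < ε` whenever `x⁻¹y ∈ E`, where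
`u_n(x,y) = |γ_x^n ∩ γ_y^n|/(n+1)`. -/
theorem freeGroup_overlap_kernel_close_to_one {α : Type*} [DecidableEq α]
    (s : α) (E : Finset (FreeGroup α)) (ε : ℝ) (hε : 0 < ε) :
    ∃ N : ℕ, ∀ x y : FreeGroup α, x⁻¹ * y ∈ E →
      |1 - ((gammaSeg s x N ∩ gammaSeg s y N).ncard : ℝ) / (N + 1)| < ε := by
  classical
  set D := E.sup (fun e => e.toWord.length) with hD
  obtain ⟨M, hM⟩ := exists_nat_gt ((2 * (D:ℝ) + 1) / ε)
  refine ⟨M + 2 * D + 1, fun x y hxy => ?_⟩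
  set N := M + 2 * D + 1 with hN
  have hDxy : wordDist x y ≤ D := Finset.le_sup (f := fun e => e.toWord.length) hxy
  have hsub : gammaSeg s x N ∩ gammaSeg s y N ⊆ FGAux.pt s x '' Set.Iic N := by
    rintro g ⟨⟨hg1, hg2⟩, -⟩
    exact ⟨wordDist x g, hg2, (FGAux.gamma_eq_pt s hg1).symm⟩
  have hfin : (FGAux.pt s x '' Set.Iic N).Finite := (Set.finite_Iic N).image _
  have hfin2 : (gammaSeg s x N ∩ gammaSeg s y N).Finite := hfin.subset hsub
  have hub : (gammaSeg s x N ∩ gammaSeg s y N).ncard ≤ N + 1 := by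
    calc (gammaSeg s x N ∩ gammaSeg s y N).ncard
        ≤ (FGAux.pt s x '' Set.Iic N).ncard := Set.ncard_le_ncard hsub hfin
      _ ≤ (Set.Iic N).ncard := Set.ncard_image_le (Set.finite_Iic N)
      _ = N + 1 := by rw [← Finset.coe_Iic, Set.ncard_coe_finset, Nat.card_Iic]
  have hTsub : ∀ n ∈ Finset.Ioc D (N - D),
      FGAux.pt s x n ∈ gammaSeg s x N ∩ gammaSeg s y N := by
    intro n hn
    rw [Finset.mem_Ioc] at hn
    have hmem := FGAux.pt_mem s x n
    have hdist := FGAux.pt_dist s x n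
    have hxg : wordDist x (FGAux.pt s x n) ≤ N := by omega
    have hmemy : FGAux.pt s x n ∈ gammaRay s y :=
      FGAux.mem_gamma_of_dist_lt s hmem (by omega)
    have hyg : wordDist y (FGAux.pt s x n) ≤ N := by
      have t1 := FGAux.wordDist_triangle y x (FGAux.pt s x n)
      have t2 := FGAux.wordDist_symm y x
      omega
    exact ⟨⟨hmem, hxg⟩, hmemy, hyg⟩
  have hcard : (M + 1 : ℕ) ≤ (gammaSeg s x N ∩ gammaSeg s y N).ncard := by
    have hinj : Set.InjOn (FGAux.pt s x) ↑(Finset.Ioc D (N - D)) := by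
      intro a _ b _ hab
      have ha := FGAux.pt_dist s x a
      have hb := FGAux.pt_dist s x b
      rw [← ha, ← hb, hab]
    calc (M + 1 : ℕ)
        = (Finset.Ioc D (N - D)).card := by rw [Nat.card_Ioc]; omega
      _ = (FGAux.pt s x '' ↑(Finset.Ioc D (N - D))).ncard := by
          rw [Set.ncard_image_of_injOn hinj, Set.ncard_coe_finset]
      _ ≤ _ := by
          refine Set.ncard_le_ncard ?_ hfin2
          rintro g ⟨n, hn, rfl⟩
          exact hTsub n (by exact_mod_cast hn)
  set c := (gammaSeg s x N ∩ gammaSeg s y N).ncard with hc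
  have hNpos : (0:ℝ) < (N:ℝ) + 1 := by positivity
  have h1 : (c:ℝ) ≤ (N:ℝ) + 1 := by exact_mod_cast hub
  have hnn : 0 ≤ 1 - (c:ℝ) / ((N:ℝ) + 1) := by
    rw [sub_nonneg, div_le_one hNpos]; exact h1
  rw [abs_of_nonneg hnn]
  have hrw : 1 - (c:ℝ) / ((N:ℝ) + 1) = ((N:ℝ) + 1 - c) / ((N:ℝ) + 1) := by
    field_simp
  rw [hrw, div_lt_iff₀ hNpos]
  have h2 : ((N:ℝ) + 1 - c) ≤ 2 * (D:ℝ) + 1 := by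
    have h3 : ((M:ℝ) + 1) ≤ (c:ℝ) := by exact_mod_cast hcard
    have h4 : (N:ℝ) = (M:ℝ) + 2 * (D:ℝ) + 1 := by rw [hN]; push_cast; ring
    linarith
  have h5 : (2 * (D:ℝ) + 1) < (M:ℝ) * ε := by
    have := (div_lt_iff₀ hε).1 hM
    linarith
  have h6 : (M:ℝ) * ε ≤ ((N:ℝ) + 1) * ε := by
    apply mul_le_mul_of_nonneg_right _ hε.le
    have : M ≤ N + 1 := by omega
    exact_mod_cast this
  calc (N:ℝ) + 1 - c ≤ 2 * (D:ℝ) + 1 := h2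
    _ < (M:ℝ) * ε := h5
    _ ≤ ((N:ℝ) + 1) * ε := h6
    _ = ε * ((N:ℝ) + 1) := mul_comm _ _
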